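/- The 2D robot dynamics f_i(χ) = χ U_i on SE(2), where U_i ∈ SE(2) is a fixed odometry increment, is group-affine, and the linearization matrix G_i^L such that g_i^L(exp ξ) = exp(G_i^L ξ) is given by G_i^L = Ad_{U_i⁻¹}, independent of the state χ. -/

import Mathlib

open Real NormedSpace

/-- Homogeneous matrix of an `SE(2)` element with angle `θ` and position `(x₁,x₂)`. -/
noncomputable def SE2mat (θ x₁ x₂ : ℝ) : Matrix (Fin 3) (Fin 3) ℝ :=
  !![cos θ, -sin θ, x₁; sin θ, cos θ, x₂; 0, 0, 1]

/-- Adjoint matrix `Ad_χ = [[R θ, -J x],[0,1]]` of `χ = SE2mat θ x₁ x₂`. -/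
noncomputable def SE2Ad (θ x₁ x₂ : ℝ) : Matrix (Fin 3) (Fin 3) ℝ :=
  !![cos θ, -sin θ, x₂; sin θ, cos θ, -x₁; 0, 0, 1]

/-- Wedge map `ξ ↦ ξ^∧` of `se(2)`, with `ξ = (v₁, v₂, ω)`. -/
noncomputable def se2hat (ξ : Fin 3 → ℝ) : Matrix (Fin 3) (Fin 3) ℝ :=
  !![0, -ξ 2, ξ 0; ξ 2, 0, ξ 1; 0, 0, 0]

noncomputable def SE2inv (θ x₁ x₂ : ℝ) : Matrix (Fin 3) (Fin 3) ℝ :=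
  !![cos θ, sin θ, -(cos θ * x₁ + sin θ * x₂);
     -sin θ, cos θ, sin θ * x₁ - cos θ * x₂; 0, 0, 1]

noncomputable def SE2Adinv (θ x₁ x₂ : ℝ) : Matrix (Fin 3) (Fin 3) ℝ :=
  !![cos θ, sin θ, -(cos θ * x₂ - sin θ * x₁);
     -sin θ, cos θ, sin θ * x₂ + cos θ * x₁; 0, 0, 1]

lemma SE2inv_mul (θ x₁ x₂ : ℝ) : SE2inv θ x₁ x₂ * SE2mat θ x₁ x₂ = 1 := by
  have h := sin_sq_add_cos_sq θ
  ext i j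
  fin_cases i <;> fin_cases j <;>
    simp [SE2inv, SE2mat, Matrix.mul_apply, Fin.sum_univ_succ, Matrix.one_apply] <;>
    first | ring1 | linear_combination h | linear_combination (-x₁) * h |
      linear_combination (-x₂) * h | linear_combination x₁ * h | linear_combination x₂ * h

lemma mul_SE2inv (θ x₁ x₂ : ℝ) : SE2mat θ x₁ x₂ * SE2inv θ x₁ x₂ = 1 := by
  have h := sin_sq_add_cos_sq θ
  ext i j
  fin_cases i <;> fin_cases j <;>
    simp [SE2inv, SE2mat, Matrix.mul_apply, Fin.sum_univ_succ, Matrix.one_apply] <;>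
    first | ring1 | linear_combination h | linear_combination (-x₁) * h |
      linear_combination (-x₂) * h | linear_combination x₁ * h | linear_combination x₂ * h

lemma SE2Adinv_mul (θ x₁ x₂ : ℝ) : SE2Adinv θ x₁ x₂ * SE2Ad θ x₁ x₂ = 1 := by
  have h := sin_sq_add_cos_sq θ
  ext i j
  fin_cases i <;> fin_cases j <;>
    simp [SE2Adinv, SE2Ad, Matrix.mul_apply, Fin.sum_univ_succ, Matrix.one_apply] <;>
    first | ring1 | linear_combination h | linear_combination (-x₁) * h |
      linear_combination (-x₂) * h | linear_combination x₁ * h | linear_combination x₂ * h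

lemma SE2mat_inv (θ x₁ x₂ : ℝ) : (SE2mat θ x₁ x₂)⁻¹ = SE2inv θ x₁ x₂ :=
  Matrix.inv_eq_left_inv (SE2inv_mul θ x₁ x₂)

lemma SE2Ad_inv (θ x₁ x₂ : ℝ) : (SE2Ad θ x₁ x₂)⁻¹ = SE2Adinv θ x₁ x₂ :=
  Matrix.inv_eq_left_inv (SE2Adinv_mul θ x₁ x₂)

/-- The odometry dynamics `f(χ) = χ U` on `SE(2)` is group-affine, and its
linearization matrix is `G^L = Ad_{U⁻¹} = (Ad_U)⁻¹`, independent of the state: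
`g^L (exp ξ^∧) = U⁻¹ exp(ξ^∧) U = exp ((Ad_{U⁻¹} ξ)^∧)`. -/
theorem se2_dynamics_group_affine (ω u₁ u₂ : ℝ) :
    (∀ a b : Matrix (Fin 3) (Fin 3) ℝ,
        a * b * SE2mat ω u₁ u₂ =
          (a * SE2mat ω u₁ u₂) * (1 * SE2mat ω u₁ u₂)⁻¹ * (b * SE2mat ω u₁ u₂)) ∧
      (∀ ξ : Fin 3 → ℝ,
        (SE2mat ω u₁ u₂)⁻¹ * NormedSpace.exp (se2hat ξ) * SE2mat ω u₁ u₂ =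
          NormedSpace.exp (se2hat ((SE2Ad ω u₁ u₂)⁻¹.mulVec ξ))) := by
  have hU : IsUnit (SE2mat ω u₁ u₂) :=
    ⟨⟨SE2mat ω u₁ u₂, SE2inv ω u₁ u₂, mul_SE2inv ω u₁ u₂, SE2inv_mul ω u₁ u₂⟩, rfl⟩
  constructor
  · intro a b
    rw [one_mul, SE2mat_inv, mul_assoc a (SE2mat ω u₁ u₂) (SE2inv ω u₁ u₂),
      mul_SE2inv, mul_one, mul_assoc]
  · intro ξ
    have key : (SE2mat ω u₁ u₂)⁻¹ * se2hat ξ * SE2mat ω u₁ u₂ =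
        se2hat ((SE2Ad ω u₁ u₂)⁻¹.mulVec ξ) := by
      rw [SE2mat_inv, SE2Ad_inv]
      have h := sin_sq_add_cos_sq ω
      ext i j
      fin_cases i <;> fin_cases j <;>
        simp [SE2inv, SE2mat, SE2Adinv, se2hat, Matrix.mul_apply, Matrix.mulVec,
          dotProduct, Fin.sum_univ_succ, Matrix.vecHead, Matrix.vecTail] <;>
        first | ring1 | linear_combination (ξ 2) * h | linear_combination (-(ξ 2)) * h
    rw [← key]
    exact (Matrix.exp_conj' _ _ hU).symm
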